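/- For integers $n \ge k \ge 1$: $\sum_{i=k}^{n} \binom{n}{i}\binom{i-1}{k-1} = \binom{n}{k}2^{n-k} - \beta$ where $\beta = \binom{n}{k}2^{n-k} - \sum_{i=k}^n\binom{n}{i}\binom{i-1}{k-1}$ satisfies $1 + (-1)^k \beta = \sum_{\ell=0}^{k}(-1)^\ell \binom{n}{\ell}2^{n-\ell}$. Equivalently, prove the identity $\sum_{\ell=0}^{k}(-1)^\ell \binom{n}{\ell}2^{n-\ell} = 1 + (-1)^k\left(\binom{n}{k}2^{n-k} - \sum_{i=k}^n \binom{n}{i}\binom{i-1}{k-1}\right)$ for all $1 \le k \le n$. -/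

import Mathlib

lemma aux_sum (n k : ℕ) (h : k ≤ n) :
    ∑ i ∈ Finset.Icc k n, n.choose i * i.choose k = n.choose k * 2 ^ (n - k) := by
  rw [← Finset.Ico_add_one_right_eq_Icc, Finset.sum_Ico_eq_sum_range]
  have key : ∀ j ∈ Finset.range (n + 1 - k), n.choose (k + j) * (k + j).choose k
      = n.choose k * (n - k).choose j := by
    intro j hj
    have hj' : k + j ≤ n := by
      have := Finset.mem_range.mp hj; omega
    rw [Nat.choose_mul (Nat.le_add_right k j), Nat.add_sub_cancel_left]
  rw [Finset.sum_congr rfl key, ← Finset.mul_sum]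
  have : n + 1 - k = (n - k) + 1 := by omega
  rw [this, Nat.sum_range_choose]

lemma step_sum (n k : ℕ) (hk : 1 ≤ k) (hkn : k ≤ n) :
    (∑ i ∈ Finset.Icc k n, n.choose i * (i - 1).choose (k - 1)) +
      ∑ i ∈ Finset.Icc (k + 1) n, n.choose i * (i - 1).choose k
        = n.choose k * 2 ^ (n - k) := by
  have hins : Finset.Icc k n = insert k (Finset.Icc (k + 1) n) := by
    ext x; simp; omega
  rw [← aux_sum n k hkn, hins, Finset.sum_insert (by simp),
    Finset.sum_insert (by simp)]
  simp only [Nat.choose_self, mul_one]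
  rw [add_assoc]
  congr 1
  rw [← Finset.sum_add_distrib]
  refine Finset.sum_congr rfl fun i hi => ?_
  have hi' : k + 1 ≤ i := (Finset.mem_Icc.mp hi).1
  have h1 : i = (i - 1) + 1 := by omega
  have h2 : k = (k - 1) + 1 := by omega
  have h3 : i.choose k = (i - 1).choose (k - 1) + (i - 1).choose k := by
    conv_lhs => rw [h1, h2]
    rw [Nat.choose_succ_succ, Nat.succ_eq_add_one, ← h2]
  rw [h3, Nat.mul_add]

theorem stmt14 (n k : ℕ) (hk : 1 ≤ k) (hkn : k ≤ n) :
    (∑ ℓ ∈ Finset.range (k + 1), (-1 : ℤ) ^ ℓ * (n.choose ℓ : ℤ) * 2 ^ (n - ℓ)) =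
      1 + (-1 : ℤ) ^ k *
        ((n.choose k : ℤ) * 2 ^ (n - k) -
          ∑ i ∈ Finset.Icc k n, (n.choose i : ℤ) * ((i - 1).choose (k - 1) : ℤ)) := by
  induction k, hk using Nat.le_induction with
  | base =>
    have hsum : (∑ i ∈ Finset.Icc 1 n, (n.choose i : ℤ)) = 2 ^ n - 1 := by
      have h0 : Finset.range (n + 1) = insert 0 (Finset.Icc 1 n) := by
        ext x; simp; omega
      have := Nat.sum_range_choose n
      rw [h0, Finset.sum_insert (by simp)] at this
      have : ((Nat.choose n 0 + ∑ i ∈ Finset.Icc 1 n, n.choose i : ℕ) : ℤ) = 2 ^ n := by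
        exact_mod_cast congrArg (Nat.cast : ℕ → ℤ) this
      push_cast at this
      simp only [Nat.choose_zero_right, Nat.cast_one] at this
      linarith
    simp only [Finset.sum_range_succ, Finset.sum_range_zero]
    simp only [Nat.sub_self, Nat.choose_zero_right, Nat.cast_one, Nat.sub_zero]
    simp only [mul_one]
    rw [hsum]
    ring
  | succ k hk1 ih =>
    have hkn' : k ≤ n := by omega
    have hstep := step_sum n k hk1 hkn'
    have hstepZ : ((n.choose k : ℤ) * 2 ^ (n - k)) =
        (∑ i ∈ Finset.Icc k n, (n.choose i : ℤ) * ((i - 1).choose (k - 1) : ℤ)) +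
        ∑ i ∈ Finset.Icc (k + 1) n, (n.choose i : ℤ) * ((i - 1).choose k : ℤ) := by
      exact_mod_cast congrArg (Nat.cast : ℕ → ℤ) hstep.symm
    rw [Finset.sum_range_succ, ih hkn']
    simp only [Nat.add_sub_cancel]
    linear_combination ((-1 : ℤ) ^ k) * hstepZ
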